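/- For every integer n ≥ 0, the number of basis partitions of n with even signature minus the number of basis partitions of n with odd signature equals 1 if n is a perfect square, and equals 0 otherwise. -/

import Mathlib

open Finset
open scoped Classical

namespace BasisPartitions

/-! ### Ordinary partitions -/

/-- The parts of a partition, listed in weakly decreasing order. -/
def sparts {n : ℕ} (π : n.Partition) : List ℕ := π.parts.sort (· ≥ ·)

/-- `conj L j` is the number of parts that are `≥ j`, i.e. the `j`-th part of the
conjugate partition (for `j ≥ 1`). -/
def conj (L : List ℕ) (j : ℕ) : ℕ := L.countP (fun b => j ≤ b)

/-- The Durfee square size: the largest `k` such that the `k`-th part is `≥ k`. -/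
def durfee (L : List ℕ) : ℕ := (List.range L.length).countP (fun i => i + 1 ≤ L.getD i 0)

/-- The `(i+1)`-st successive rank `r_{i+1} = b_{i+1} - c_{i+1}` (0-indexed `i`). -/
def rank (L : List ℕ) (i : ℕ) : ℤ := (L.getD i 0 : ℤ) - (conj L (i + 1) : ℤ)

/-- The successive rank vector `(r_1, ..., r_k)` where `k` is the Durfee square size. -/
def ranks (L : List ℕ) : List ℤ := (List.range (durfee L)).map (rank L)

/-- A basis partition: the partitioned number is minimal among all partitions having
the same successive rank vector. -/
def IsBasis {n : ℕ} (π : n.Partition) : Prop :=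
  ∀ (m : ℕ) (π' : m.Partition), ranks (sparts π') = ranks (sparts π) → n ≤ m

/-- The signature: the number of distinct part sizes below the Durfee square. -/
def sig (L : List ℕ) : ℕ := ((L.drop (durfee L)).dedup).length

/-- `b(n;k)`: the number of basis partitions of `n` with Durfee square size `k`. -/
noncomputable def bCount (n k : ℕ) : ℕ :=
  Nat.card {π : n.Partition // IsBasis π ∧ durfee (sparts π) = k}

/-- `b(n,k,s)`: the number of basis partitions of `n` with Durfee square size `k`
and signature `s`. -/
noncomputable def bCount3 (n k s : ℕ) : ℕ :=
  Nat.card {π : n.Partition // IsBasis π ∧ durfee (sparts π) = k ∧ sig (sparts π) = s}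

/-- `B(n;j)`: the number of basis partitions of `n` with signature `j`. -/
noncomputable def BCount (n j : ℕ) : ℕ :=
  Nat.card {π : n.Partition // IsBasis π ∧ sig (sparts π) = j}

/-- Rogers–Ramanujan condition: exactly `k` parts, consecutive gaps `≥ 2`, last part `≥ 1`. -/
def RR (L : List ℕ) (k : ℕ) : Prop :=
  L.length = k ∧ (∀ i, i + 1 < k → L.getD (i + 1) 0 + 2 ≤ L.getD i 0) ∧ 1 ≤ L.getD (k - 1) 0

/-- `t(π)` for a Rogers–Ramanujan partition: the number of gaps `> 2`, plus 1 if the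
last part is `> 1`. -/
def tRR (L : List ℕ) (k : ℕ) : ℕ :=
  ((Finset.range (k - 1)).filter (fun i => L.getD (i + 1) 0 + 2 < L.getD i 0)).card +
    (if 1 < L.getD (k - 1) 0 then 1 else 0)

/-- Primary condition: exactly `k` parts, each part `≥ k`. -/
def Primary (L : List ℕ) (k : ℕ) : Prop := L.length = k ∧ ∀ x ∈ L, k ≤ x

/-- `t(π)` for a primary partition: the number of strict descents, plus 1 if the
last part is `> k`. -/
def tP (L : List ℕ) (k : ℕ) : ℕ :=
  ((Finset.range (k - 1)).filter (fun i => L.getD (i + 1) 0 < L.getD i 0)).card +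
    (if k < L.getD (k - 1) 0 then 1 else 0)

/-- A complete basis partition: every `j` with `1 ≤ j ≤ k-1` occurs as a part of `π_b`
(a row below the Durfee square) or as a part of `π_r` (a column length strictly to the
right of the Durfee square). -/
def IsComplete {n : ℕ} (π : n.Partition) : Prop :=
  ∀ j : ℕ, 1 ≤ j → j < durfee (sparts π) →
    j ∈ (sparts π).drop (durfee (sparts π)) ∨
      ∃ c : ℕ, durfee (sparts π) < c ∧ conj (sparts π) c = j

/-- `b_c(n)`: the number of complete basis partitions of `n`. -/
noncomputable def bc (n : ℕ) : ℕ := Nat.card {π : n.Partition // IsBasis π ∧ IsComplete π}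

/-! ### Partitions with non-repeating odd parts and their 2-modular graphs -/

/-- Partitions with non-repeating (distinct) odd parts. -/
def Pod {n : ℕ} (π : n.Partition) : Prop := ∀ x, Odd x → π.parts.count x ≤ 1

/-- The size (sum of entries) of the `c`-th column (1-indexed) of the 2-modular graph. -/
def mcolSize (L : List ℕ) (c : ℕ) : ℕ :=
  (L.map (fun x => if 2 * c ≤ x then 2 else if x = 2 * c - 1 then 1 else 0)).sum

/-- The length (number of entries) of the `c`-th column (1-indexed) of the 2-modular graph. -/
def mcolLen (L : List ℕ) (c : ℕ) : ℕ := L.countP (fun x => 2 * c - 1 ≤ x)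

/-- The number of entries in a row of the 2-modular graph recording the part `x`,
namely `⌈x/2⌉`. -/
def mrowLen (x : ℕ) : ℕ := (x + 1) / 2

/-- The 2-modular Durfee square size: the largest `k` with `⌈b_k/2⌉ ≥ k`. -/
def mdurfee (L : List ℕ) : ℕ := (List.range L.length).countP (fun i => 2 * i + 1 ≤ L.getD i 0)

/-- The `(i+1)`-st 2-modular successive rank: (size of row `i+1`) − (size of column `i+1`). -/
def mrank (L : List ℕ) (i : ℕ) : ℤ := (L.getD i 0 : ℤ) - (mcolSize L (i + 1) : ℤ)

/-- The 2-modular successive rank vector. -/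
def mranks (L : List ℕ) : List ℤ := (List.range (mdurfee L)).map (mrank L)

/-- A minimal basis partition in `P_{o,d}`: the partitioned number is minimal among all
partitions with non-repeating odd parts having the same 2-modular successive rank vector. -/
def MinBasis {n : ℕ} (μ : n.Partition) : Prop :=
  Pod μ ∧ ∀ (m : ℕ) (μ' : m.Partition), Pod μ' →
    mranks (sparts μ') = mranks (sparts μ) → n ≤ m

/-- A basis partition in `P_{o,d}`: no row of the 2-modular graph strictly below the Durfee
square has size equal to the size of a column strictly to the right of the Durfee square. -/
def PodBasis {n : ℕ} (π : n.Partition) : Prop :=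
  Pod π ∧ ∀ i, mdurfee (sparts π) ≤ i → i < (sparts π).length →
    ∀ c, mdurfee (sparts π) < c → mcolSize (sparts π) c ≠ (sparts π).getD i 0

/-- The signature of a basis partition in `P_{o,d}`: the number of distinct sizes among the
rows of the 2-modular graph strictly below the Durfee square. -/
def msig (L : List ℕ) : ℕ := ((L.drop (mdurfee L)).dedup).length

/-- The ℓ-signature: the number of distinct lengths among the rows of the 2-modular
graph strictly below the Durfee square. -/
def lsig (L : List ℕ) : ℕ := (((L.drop (mdurfee L)).map mrowLen).dedup).length

/-- `b(n;j)` for `P_{o,d}`: the number of basis partitions of `n` in `P_{o,d}` with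
signature `j`. -/
noncomputable def podB (n j : ℕ) : ℕ := Nat.card {π : n.Partition // PodBasis π ∧ msig (sparts π) = j}

/-- The number of odd parts. -/
def numOdd (L : List ℕ) : ℕ := L.countP (fun x => x % 2 = 1)

/-- A special partition: distinct parts with consecutive differences `≥ 4`, where a
difference equal to `4` is permitted only when both parts are even. -/
def Special (L : List ℕ) : Prop :=
  ∀ i, i + 1 < L.length →
    L.getD (i + 1) 0 + 4 ≤ L.getD i 0 ∧
      (L.getD i 0 = L.getD (i + 1) 0 + 4 → Even (L.getD i 0) ∧ Even (L.getD (i + 1) 0))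

/-- The `i`-th part of a special partition, with the convention that the part just after
the last one is `-2`. -/
def hpart (L : List ℕ) (i : ℕ) : ℤ := if i < L.length then (L.getD i 0 : ℤ) else -2

/-- `ℓ(π)`: the number of gaps `> 4` in a special partition, with the convention
`h_{k+1} = -2`. -/
def ell (L : List ℕ) : ℕ :=
  ((Finset.range L.length).filter (fun i => 4 < hpart L i - hpart L (i + 1))).card



/-! ### Auxiliary development -/

section Aux


lemma sum_eq_sum_getD (M : List ℕ) : M.sum = ∑ i ∈ Finset.range M.length, M.getD i 0 := by
  induction M with
  | nil => simp
  | cons x t ih =>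
    rw [List.sum_cons, List.length_cons, Finset.sum_range_succ', ih]
    simp [List.getD]
    omega

lemma getD_anti {M : List ℕ} (hs : M.Pairwise (· ≥ ·)) {i j : ℕ} (h : i ≤ j) :
    M.getD j 0 ≤ M.getD i 0 := by
  rcases eq_or_lt_of_le h with rfl | hij
  · exact le_refl _
  by_cases hj : j < M.length
  · rw [List.getD_eq_getElem _ _ hj, List.getD_eq_getElem _ _ (lt_trans hij hj)]
    exact hs.rel_get_of_lt (show (⟨i,_⟩ : Fin _) < ⟨j,_⟩ from hij)
  · rw [List.getD_eq_default _ _ (le_of_not_gt hj)]; exact Nat.zero_le _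

lemma countP_le_split (M : List ℕ) (j : ℕ) :
    M.countP (fun x => j ≤ x) = M.countP (fun x => j+1 ≤ x) + M.count j := by
  induction M with
  | nil => simp
  | cons x t ih =>
    rw [List.countP_cons, List.countP_cons, List.count_cons, ih]
    by_cases h1 : x = j <;> by_cases h2 : j ≤ x <;> by_cases h3 : j + 1 ≤ x <;>
      simp [h1, h2, h3] <;> omega

lemma sum_eq_sum_count (k : ℕ) (M : List ℕ) (h : ∀ x ∈ M, 0 < x ∧ x ≤ k) :
    M.sum = ∑ i ∈ Finset.range k, (i+1) * M.count (i+1) := by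
  induction M with
  | nil => simp
  | cons x t ih =>
    obtain ⟨hx1, hx2⟩ := h x (List.mem_cons_self)
    rw [List.sum_cons, ih (fun y hy => h y (List.mem_cons_of_mem _ hy))]
    have : ∀ i, t.count i + (if x = i then 1 else 0) = (x :: t).count i := by
      intro i; rw [List.count_cons]; simp [beq_iff_eq]
    simp_rw [← this, Nat.mul_add, Finset.sum_add_distrib]
    have : ∑ i ∈ Finset.range k, (i+1) * (if x = i+1 then 1 else 0) = x := by
      rw [Finset.sum_eq_single (x-1)]
      · have hxx : x - 1 + 1 = x := by omega
        rw [hxx, if_pos rfl, Nat.mul_one]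
      · intro b _ hb
        have : x ≠ b + 1 := by omega
        simp [this]
      · intro hx; exfalso; apply hx; rw [Finset.mem_range]; omega
    omega

lemma sorted_eq_of_count {M N : List ℕ} (hM : M.Pairwise (· ≥ ·)) (hN : N.Pairwise (· ≥ ·))
    (h : ∀ v, M.count v = N.count v) : M = N := by
  haveI : Std.Antisymm (α := ℕ) (· ≥ ·) := ⟨fun a b h1 h2 => le_antisymm h2 h1⟩
  exact List.Perm.eq_of_pairwise' hM hN (List.perm_iff_count.mpr h)

lemma countP_range_spec (p : ℕ → Bool) (hmono : ∀ i j, i ≤ j → p j → p i) (m : ℕ) :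
    (∀ i < (List.range m).countP p, p i) ∧
      (∀ i, (List.range m).countP p ≤ i → i < m → ¬ p i) := by
  induction m with
  | zero => simp
  | succ m ih =>
    have hr : (List.range (m+1)).countP p = (List.range m).countP p + (if p m then 1 else 0) := by
      rw [List.range_succ, List.countP_append]
      simp [List.countP_cons]
    by_cases hm : p m
    · have hall : (List.range m).countP p = m := by
        have h2 := (List.countP_eq_length (p := p) (l := List.range m)).mpr
          (fun a ha => hmono a m (le_of_lt (List.mem_range.mp ha)) hm)
        simpa using h2
      rw [hr, hall, if_pos hm]
      refine ⟨fun i hi => ?_, fun i h1 h2 => by omega⟩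
      rcases Nat.lt_succ_iff_lt_or_eq.mp hi with h | h
      · exact ih.1 i (by omega)
      · exact h ▸ hm
    · rw [hr, if_neg hm]
      refine ⟨fun i hi => ih.1 i (by omega), fun i h1 h2 => ?_⟩
      rcases Nat.lt_succ_iff_lt_or_eq.mp h2 with h | h
      · exact ih.2 i (by omega) h
      · exact h ▸ hm

lemma sum_Ico_sum (g : ℕ → ℕ) (k : ℕ) :
    ∑ i ∈ Finset.range k, ∑ j ∈ Finset.Ico i k, g j = ∑ j ∈ Finset.range k, (j+1) * g j := by
  induction k with
  | zero => simp
  | succ k ih =>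
    rw [Finset.sum_range_succ, Finset.sum_range_succ (fun j => (j+1) * g j), ← ih]
    have : ∀ i ∈ Finset.range k, ∑ j ∈ Finset.Ico i (k+1), g j
        = (∑ j ∈ Finset.Ico i k, g j) + g k := by
      intro i hi; exact Finset.sum_Ico_succ_top (le_of_lt (Finset.mem_range.mp hi)) g
    rw [Finset.sum_congr rfl this, Finset.sum_add_distrib]
    simp; ring


lemma sparts_sorted {n : ℕ} (π : n.Partition) : (sparts π).Pairwise (· ≥ ·) :=
  Multiset.pairwise_sort _ _

lemma sparts_pos {n : ℕ} (π : n.Partition) : ∀ x ∈ sparts π, 0 < x :=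
  fun x hx => π.parts_pos (by rwa [sparts, Multiset.mem_sort] at hx)

lemma sparts_sum {n : ℕ} (π : n.Partition) : (sparts π).sum = n := by
  have h : ((sparts π : List ℕ) : Multiset ℕ).sum = n := by
    rw [sparts, Multiset.sort_eq]; exact π.parts_sum
  simpa using h

def ofList (M : List ℕ) (hpos : ∀ x ∈ M, 0 < x) : (M.sum).Partition :=
  ⟨(M : Multiset ℕ), fun {x} hx => hpos x (by simpa using hx), by simp⟩

lemma sparts_ofList {M : List ℕ} (hpos : ∀ x ∈ M, 0 < x) (hs : M.Pairwise (· ≥ ·)) :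
    sparts (ofList M hpos) = M := by
  haveI : Std.Antisymm (α := ℕ) (· ≥ ·) := ⟨fun a b h1 h2 => le_antisymm h2 h1⟩
  refine List.Perm.eq_of_pairwise' (sparts_sorted _) hs ?_
  rw [← Multiset.coe_eq_coe, sparts, Multiset.sort_eq]; rfl

lemma sparts_injective {n : ℕ} {π π' : n.Partition} (h : sparts π = sparts π') : π = π' := by
  apply Nat.Partition.ext
  have h1 : ((sparts π : List ℕ) : Multiset ℕ) = ((sparts π' : List ℕ) : Multiset ℕ) := by rw [h]
  rwa [sparts, sparts, Multiset.sort_eq, Multiset.sort_eq] at h1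

/-! ### Durfee square structure -/

lemma durfee_le_length (L : List ℕ) : durfee L ≤ L.length :=
  le_trans (List.countP_le_length) (by simp)

lemma durfee_mono (L : List ℕ) (hs : L.Pairwise (· ≥ ·)) :
    ∀ i j : ℕ, i ≤ j → (fun i => decide (i + 1 ≤ L.getD i 0)) j →
      (fun i => decide (i + 1 ≤ L.getD i 0)) i := by
  intro i j hij hj
  simp only [decide_eq_true_eq] at *
  calc i + 1 ≤ j + 1 := by omega
    _ ≤ L.getD j 0 := hj
    _ ≤ L.getD i 0 := getD_anti hs hij

lemma durfee_spec1 {L : List ℕ} (hs : L.Pairwise (· ≥ ·)) {i : ℕ} (h : i < durfee L) :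
    i + 1 ≤ L.getD i 0 := by
  have := (countP_range_spec _ (durfee_mono L hs) L.length).1 i h
  simpa using this

lemma durfee_getD_le {L : List ℕ} (hs : L.Pairwise (· ≥ ·)) : L.getD (durfee L) 0 ≤ durfee L := by
  by_cases hk : durfee L < L.length
  · have := (countP_range_spec _ (durfee_mono L hs) L.length).2 (durfee L) (le_refl _) hk
    simp only [decide_eq_true_eq] at this
    omega
  · rw [List.getD_eq_default _ _ (le_of_not_gt hk)]; exact Nat.zero_le _

lemma part_ge {L : List ℕ} (hs : L.Pairwise (· ≥ ·)) {i : ℕ} (h : i < durfee L) :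
    durfee L ≤ L.getD i 0 := by
  have h1 := durfee_spec1 hs (show durfee L - 1 < durfee L by omega)
  have h2 := getD_anti hs (show i ≤ durfee L - 1 by omega)
  omega

lemma part_le {L : List ℕ} (hs : L.Pairwise (· ≥ ·)) {i : ℕ} (h : durfee L ≤ i) :
    L.getD i 0 ≤ durfee L :=
  le_trans (getD_anti hs h) (durfee_getD_le hs)

lemma mem_take_ge {L : List ℕ} (hs : L.Pairwise (· ≥ ·)) {x : ℕ}
    (hx : x ∈ L.take (durfee L)) : durfee L ≤ x := by
  obtain ⟨i, hi, rfl⟩ := List.mem_iff_getElem.mp hx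
  have hi2 : i < durfee L := lt_of_lt_of_le hi (by simp)
  rw [List.getElem_take]
  rw [← List.getD_eq_getElem _ 0 (by simp at hi; omega)]
  exact part_ge hs hi2

lemma mem_drop_bounds {L : List ℕ} (hs : L.Pairwise (· ≥ ·)) {x : ℕ}
    (hx : x ∈ L.drop (durfee L)) : x ≤ durfee L := by
  obtain ⟨i, hi, rfl⟩ := List.mem_iff_getElem.mp hx
  rw [List.getElem_drop]
  rw [← List.getD_eq_getElem _ 0 (by simp at hi; omega)]
  exact part_le hs (by omega)

lemma conj_eq {L : List ℕ} (hs : L.Pairwise (· ≥ ·)) {j : ℕ} (h1 : 0 < j) (h2 : j ≤ durfee L) :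
    conj L j = durfee L + (L.drop (durfee L)).countP (fun x => decide (j ≤ x)) := by
  conv_lhs => rw [conj, ← List.take_append_drop (durfee L) L, List.countP_append]
  congr 1
  rw [List.countP_eq_length.mpr (fun a ha => by
    simp only [decide_eq_true_eq]
    exact le_trans h2 (mem_take_ge hs ha))]
  rw [List.length_take]
  exact min_eq_left (durfee_le_length L)

/-! ### `dlt`, `eps`, `cval` -/

def dlt (L : List ℕ) (i : ℕ) : ℕ := L.getD i 0 - max (durfee L) (L.getD (i+1) 0)

def eps (L : List ℕ) (i : ℕ) : ℕ := (L.drop (durfee L)).count (i+1)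

def cval (L : List ℕ) (i : ℕ) : ℤ := (dlt L i : ℤ) - (eps L i : ℤ)

def Disj (L : List ℕ) : Prop := ∀ i < durfee L, dlt L i = 0 ∨ eps L i = 0

lemma dlt_eq_zero {L : List ℕ} (hs : L.Pairwise (· ≥ ·)) {i : ℕ} (h : durfee L ≤ i) :
    dlt L i = 0 :=
  Nat.sub_eq_zero_of_le (le_trans (part_le hs h) (le_max_left _ _))

lemma eps_eq_zero {L : List ℕ} (hs : L.Pairwise (· ≥ ·)) {i : ℕ} (h : durfee L ≤ i) :
    eps L i = 0 :=
  List.count_eq_zero.mpr (fun hc => by have := mem_drop_bounds hs hc; omega)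

lemma getD_sub_sum {L : List ℕ} (hs : L.Pairwise (· ≥ ·)) :
    ∀ d i, i + d = durfee L →
      L.getD i 0 - durfee L = ∑ j ∈ Finset.Ico i (durfee L), dlt L j := by
  intro d
  induction d with
  | zero =>
    intro i hi
    have h0 : i = durfee L := by omega
    subst h0
    have := durfee_getD_le hs
    simp only [Finset.Ico_self, Finset.sum_empty]
    omega
  | succ d ih =>
    intro i hi
    have hik : i < durfee L := by omega
    rw [Finset.sum_eq_sum_Ico_succ_bot hik, ← ih (i+1) (by omega)]
    have h1 : durfee L ≤ L.getD i 0 := part_ge hs hik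
    have h2 : L.getD (i+1) 0 ≤ L.getD i 0 := getD_anti hs (by omega)
    rw [dlt]
    rcases Nat.le_total (L.getD (i+1) 0) (durfee L) with h | h
    · rw [max_eq_left h]; omega
    · rw [max_eq_right h]; omega

lemma sum_formula {L : List ℕ} (hs : L.Pairwise (· ≥ ·)) (hp : ∀ x ∈ L, 0 < x) :
    L.sum = durfee L * durfee L +
      ∑ i ∈ Finset.range (durfee L), (i+1) * (dlt L i + eps L i) := by
  set k := durfee L with hk
  have hkl : k ≤ L.length := durfee_le_length L
  have hsplit : L.sum = (L.take k).sum + (L.drop k).sum := by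
    conv_lhs => rw [← List.take_append_drop k L]
    rw [List.sum_append]
  have hlen : (L.take k).length = k := by rw [List.length_take]; exact min_eq_left hkl
  have htake : (L.take k).sum = ∑ i ∈ Finset.range k, L.getD i 0 := by
    rw [sum_eq_sum_getD, hlen]
    refine Finset.sum_congr rfl (fun i hi => ?_)
    rw [Finset.mem_range] at hi
    rw [List.getD_eq_getElem _ _ (by rw [hlen]; exact hi),
      List.getD_eq_getElem _ _ (by omega), List.getElem_take]
  have hdrop : (L.drop k).sum = ∑ i ∈ Finset.range k, (i+1) * eps L i := by
    refine sum_eq_sum_count k _ (fun x hx => ⟨hp x (List.mem_of_mem_drop hx), mem_drop_bounds hs hx⟩)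
  have h2 : ∑ i ∈ Finset.range k, L.getD i 0
      = k * k + ∑ i ∈ Finset.range k, (i+1) * dlt L i := by
    have : ∀ i ∈ Finset.range k, L.getD i 0 = k + (L.getD i 0 - k) := by
      intro i hi
      have := part_ge hs (hk ▸ Finset.mem_range.mp hi)
      omega
    rw [Finset.sum_congr rfl this, Finset.sum_add_distrib, Finset.sum_const, Finset.card_range,
      smul_eq_mul]
    congr 1
    have : ∀ i ∈ Finset.range k, L.getD i 0 - k = ∑ j ∈ Finset.Ico i k, dlt L j := by
      intro i hi
      exact getD_sub_sum hs (k - i) i (by have := Finset.mem_range.mp hi; omega)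
    rw [Finset.sum_congr rfl this, sum_Ico_sum]
  have h3 : ∑ i ∈ Finset.range k, (i+1) * (dlt L i + eps L i)
      = ∑ i ∈ Finset.range k, (i+1) * dlt L i + ∑ i ∈ Finset.range k, (i+1) * eps L i := by
    simp_rw [Nat.mul_add]; rw [Finset.sum_add_distrib]
  omega

end Aux


section Rank

lemma countP_drop_hi {L : List ℕ} (hs : L.Pairwise (· ≥ ·)) :
    (L.drop (durfee L)).countP (fun x => decide (durfee L + 1 ≤ x)) = 0 := by
  rw [List.countP_eq_zero]
  intro a ha
  have := mem_drop_bounds hs ha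
  simp only [decide_eq_true_eq]
  omega

lemma rank_sum {L : List ℕ} (hs : L.Pairwise (· ≥ ·)) :
    ∀ d i, i + d + 1 = durfee L →
      rank L i = ∑ j ∈ Finset.Ico i (durfee L), cval L j := by
  intro d
  induction d with
  | zero =>
    intro i hi
    have hik : i < durfee L := by omega
    have hconj := conj_eq hs (show 0 < i + 1 by omega) (show i + 1 ≤ durfee L by omega)
    have hsplit := countP_le_split (L.drop (durfee L)) (i+1)
    have hzero : (L.drop (durfee L)).countP (fun x => decide (i + 1 + 1 ≤ x)) = 0 := by
      have h0 := countP_drop_hi hs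
      have : i + 1 + 1 = durfee L + 1 := by omega
      rw [this]; exact h0
    have hge : durfee L ≤ L.getD i 0 := part_ge hs hik
    have hd : dlt L i = L.getD i 0 - durfee L := by
      rw [dlt, max_eq_left]
      have : durfee L ≤ i + 1 := by omega
      exact part_le hs this
    have hsum : ∑ j ∈ Finset.Ico i (durfee L), cval L j = cval L i := by
      have : durfee L = i + 1 := by omega
      rw [this, Finset.sum_eq_sum_Ico_succ_bot (by omega), Finset.Ico_self,
        Finset.sum_empty, add_zero]
    rw [hsum, rank, hconj, cval, hd, eps]
    rw [hsplit, hzero] at *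
    push_cast
    omega
  | succ d ih =>
    intro i hi
    have hik : i < durfee L := by omega
    have hik1 : i + 1 < durfee L := by omega
    have hconj := conj_eq hs (show 0 < i + 1 by omega) (show i + 1 ≤ durfee L by omega)
    have hconj1 := conj_eq hs (show 0 < i + 2 by omega) (show i + 2 ≤ durfee L by omega)
    have hsplit := countP_le_split (L.drop (durfee L)) (i+1)
    have hd : dlt L i = L.getD i 0 - L.getD (i+1) 0 := by
      rw [dlt, max_eq_right (part_ge hs hik1)]
    have hge : durfee L ≤ L.getD i 0 := part_ge hs hik
    have hge1 : durfee L ≤ L.getD (i+1) 0 := part_ge hs hik1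
    have hgd : L.getD (i+1) 0 ≤ L.getD i 0 := getD_anti hs (by omega)
    have hsum : ∑ j ∈ Finset.Ico i (durfee L), cval L j
        = cval L i + ∑ j ∈ Finset.Ico (i+1) (durfee L), cval L j :=
      Finset.sum_eq_sum_Ico_succ_bot hik _
    have hih := ih (i+1) (by omega)
    rw [hsum, ← hih, rank, rank, hconj, hconj1, cval, hd, eps]
    have hc2 : (i + 1 + 1 : ℕ) = i + 2 := by omega
    rw [hc2] at hsplit
    rw [hsplit]
    push_cast
    omega

lemma ranks_getD_lt {L : List ℕ} {i : ℕ} (h : i < durfee L) :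
    (ranks L).getD i 0 = rank L i := by
  rw [ranks, List.getD_eq_getElem _ _ (by simpa using h)]
  simp

lemma ranks_getD_ge {L : List ℕ} {i : ℕ} (h : durfee L ≤ i) :
    (ranks L).getD i 0 = 0 := by
  rw [List.getD_eq_default]
  simpa [ranks] using h

lemma cval_eq_ranks {L : List ℕ} (hs : L.Pairwise (· ≥ ·)) {i : ℕ} (h : i < durfee L) :
    cval L i = (ranks L).getD i 0 - (ranks L).getD (i+1) 0 := by
  rw [ranks_getD_lt h]
  by_cases h1 : i + 1 < durfee L
  · rw [ranks_getD_lt h1, rank_sum hs (durfee L - i - 1) i (by omega),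
      rank_sum hs (durfee L - i - 2) (i+1) (by omega),
      Finset.sum_eq_sum_Ico_succ_bot h]
    ring
  · rw [ranks_getD_ge (by omega), rank_sum hs 0 i (by omega)]
    have : durfee L = i + 1 := by omega
    rw [this, Finset.sum_eq_sum_Ico_succ_bot (by omega), Finset.Ico_self,
      Finset.sum_empty]
    ring

def Nval (R : List ℤ) : ℕ :=
  ∑ i ∈ Finset.range R.length, (i+1) * (R.getD i 0 - R.getD (i+1) 0).natAbs

lemma length_ranks (L : List ℕ) : (ranks L).length = durfee L := by simp [ranks]

lemma Nval_ranks {L : List ℕ} (hs : L.Pairwise (· ≥ ·)) :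
    Nval (ranks L) = ∑ i ∈ Finset.range (durfee L), (i+1) * (cval L i).natAbs := by
  rw [Nval, length_ranks]
  refine Finset.sum_congr rfl (fun i hi => ?_)
  rw [cval_eq_ranks hs (Finset.mem_range.mp hi)]

lemma sum_ge {L : List ℕ} (hs : L.Pairwise (· ≥ ·)) (hp : ∀ x ∈ L, 0 < x) :
    durfee L * durfee L + Nval (ranks L) ≤ L.sum := by
  rw [sum_formula hs hp, Nval_ranks hs]
  have : ∀ i ∈ Finset.range (durfee L),
      (i+1) * (cval L i).natAbs ≤ (i+1) * (dlt L i + eps L i) := by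
    intro i _
    have : (cval L i).natAbs ≤ dlt L i + eps L i := by rw [cval]; omega
    exact Nat.mul_le_mul_left _ this
  have := Finset.sum_le_sum this
  omega

lemma sum_eq_of_disj {L : List ℕ} (hs : L.Pairwise (· ≥ ·)) (hp : ∀ x ∈ L, 0 < x)
    (hd : Disj L) : L.sum = durfee L * durfee L + Nval (ranks L) := by
  rw [sum_formula hs hp, Nval_ranks hs]
  congr 1
  refine Finset.sum_congr rfl (fun i hi => ?_)
  have : (cval L i).natAbs = dlt L i + eps L i := by
    rcases hd i (Finset.mem_range.mp hi) with h | h <;> rw [cval] <;> omega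
  rw [this]

lemma sum_lt_of_not_disj {L : List ℕ} (hs : L.Pairwise (· ≥ ·)) (hp : ∀ x ∈ L, 0 < x)
    {i₀ : ℕ} (hik : i₀ < durfee L) (h1 : dlt L i₀ ≠ 0) (h2 : eps L i₀ ≠ 0) :
    durfee L * durfee L + Nval (ranks L) < L.sum := by
  rw [sum_formula hs hp, Nval_ranks hs]
  have hlt : ∑ i ∈ Finset.range (durfee L), (i+1) * (cval L i).natAbs
      < ∑ i ∈ Finset.range (durfee L), (i+1) * (dlt L i + eps L i) := by
    refine Finset.sum_lt_sum (fun i _ => ?_) ⟨i₀, Finset.mem_range.mpr hik, ?_⟩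
    · refine Nat.mul_le_mul_left _ ?_
      rw [cval]; omega
    · have habs : (cval L i₀).natAbs < dlt L i₀ + eps L i₀ := by rw [cval]; omega
      exact Nat.mul_lt_mul_of_pos_left habs (by omega)
  omega

end Rank


section Decode

def rho (c : ℕ → ℤ) (k i : ℕ) : ℕ := ∑ j ∈ Finset.Ico i k, (c j).toNat

def betaList (c : ℕ → ℤ) : ℕ → List ℕ
  | 0 => []
  | (k+1) => List.replicate (-(c k)).toNat (k+1) ++ betaList c k

def decode (c : ℕ → ℤ) (k : ℕ) : List ℕ :=
  (List.range k).map (fun i => k + rho c k i) ++ betaList c k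

lemma betaList_mem {c : ℕ → ℤ} {k : ℕ} {x : ℕ} (hx : x ∈ betaList c k) :
    0 < x ∧ x ≤ k := by
  induction k with
  | zero => simp [betaList] at hx
  | succ k ih =>
    rw [betaList, List.mem_append] at hx
    rcases hx with h | h
    · have := List.eq_of_mem_replicate h
      omega
    · have := ih h
      omega

lemma betaList_sorted (c : ℕ → ℤ) (k : ℕ) : (betaList c k).Pairwise (· ≥ ·) := by
  induction k with
  | zero => simp [betaList]
  | succ k ih =>
    rw [betaList, List.pairwise_append]
    refine ⟨by rw [List.pairwise_replicate]; right; exact le_refl _, ih, ?_⟩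
    intro a ha b hb
    have h1 := List.eq_of_mem_replicate ha
    have h2 := betaList_mem hb
    simp only [ge_iff_le]
    omega

lemma betaList_count {c : ℕ → ℤ} {k v : ℕ} (h1 : 0 < v) (h2 : v ≤ k) :
    (betaList c k).count v = (-(c (v-1))).toNat := by
  induction k with
  | zero => omega
  | succ k ih =>
    rw [betaList, List.count_append, List.count_replicate]
    by_cases hv : v = k + 1
    · have hz : (betaList c k).count v = 0 :=
        List.count_eq_zero.mpr (fun hc => by have := betaList_mem hc; omega)
      rw [hz, if_pos (by simp [hv]), hv]
      simp
    · rw [if_neg (by simp; omega), ih (by omega)]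
      omega

lemma betaList_count_hi {c : ℕ → ℤ} {k v : ℕ} (h : v = 0 ∨ k < v) :
    (betaList c k).count v = 0 :=
  List.count_eq_zero.mpr (fun hc => by have := betaList_mem hc; omega)

lemma rho_succ {c : ℕ → ℤ} {k i : ℕ} (h : i < k) :
    rho c k i = (c i).toNat + rho c k (i+1) := by
  rw [rho, rho, Finset.sum_eq_sum_Ico_succ_bot h]

lemma rho_anti (c : ℕ → ℤ) (k : ℕ) {i j : ℕ} (h : i ≤ j) :
    rho c k j ≤ rho c k i :=
  Finset.sum_le_sum_of_subset (Finset.Ico_subset_Ico h (le_refl _))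

lemma decode_length (c : ℕ → ℤ) (k : ℕ) :
    (decode c k).length = k + (betaList c k).length := by
  simp [decode]

lemma decode_getD_lt {c : ℕ → ℤ} {k i : ℕ} (h : i < k) :
    (decode c k).getD i 0 = k + rho c k i := by
  rw [decode, List.getD_append _ _ _ _ (by simpa using h),
    List.getD_eq_getElem _ _ (by simpa using h), List.getElem_map]
  simp

lemma decode_sorted (c : ℕ → ℤ) (k : ℕ) : (decode c k).Pairwise (· ≥ ·) := by
  rw [decode, List.pairwise_append]
  refine ⟨?_, betaList_sorted c k, ?_⟩
  · rw [List.pairwise_map]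
    refine (List.pairwise_lt_range (n := k)).imp ?_
    intro a b hab
    have := rho_anti c k (le_of_lt hab)
    simp only [ge_iff_le]
    omega
  · intro a ha b hb
    obtain ⟨i, hi, rfl⟩ := List.mem_map.mp ha
    have := (betaList_mem hb).2
    simp only [ge_iff_le]
    omega

lemma decode_pos (c : ℕ → ℤ) (k : ℕ) : ∀ x ∈ decode c k, 0 < x := by
  intro x hx
  rw [decode, List.mem_append] at hx
  rcases hx with h | h
  · obtain ⟨i, hi, rfl⟩ := List.mem_map.mp h
    have : 0 < k := lt_of_le_of_lt (Nat.zero_le _) (List.mem_range.mp hi)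
    omega
  · exact (betaList_mem h).1

lemma durfee_eq_of {L : List ℕ} {k : ℕ} (hkl : k ≤ L.length)
    (h1 : ∀ i < k, k ≤ L.getD i 0) (h2 : ∀ i, k ≤ i → i < L.length → L.getD i 0 ≤ k) :
    durfee L = k := by
  rw [durfee, show L.length = k + (L.length - k) by omega, List.range_add,
    List.countP_append, List.countP_map]
  have hA : (List.range k).countP (fun i => decide (i + 1 ≤ L.getD i 0)) = k := by
    have := List.countP_eq_length (p := fun i => decide (i + 1 ≤ L.getD i 0))
      (l := List.range k)
    rw [List.length_range] at this
    refine this.mpr (fun a ha => ?_)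
    have ha' := List.mem_range.mp ha
    simp only [decide_eq_true_eq]
    have := h1 a ha'
    omega
  have hB : (List.range (L.length - k)).countP
      ((fun i => decide (i + 1 ≤ L.getD i 0)) ∘ (fun x => k + x)) = 0 := by
    rw [List.countP_eq_zero]
    intro a ha
    have ha' := List.mem_range.mp ha
    simp only [Function.comp_apply, decide_eq_true_eq]
    have := h2 (k + a) (by omega) (by omega)
    omega
  omega

lemma decode_drop (c : ℕ → ℤ) (k : ℕ) : (decode c k).drop k = betaList c k := by
  rw [decode, List.drop_left' (by simp)]

lemma decode_durfee (c : ℕ → ℤ) (k : ℕ) : durfee (decode c k) = k := by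
  refine durfee_eq_of (by rw [decode_length]; omega) (fun i hi => ?_) (fun i hi hil => ?_)
  · rw [decode_getD_lt hi]; omega
  · rw [decode_length] at hil
    have hgd : (decode c k).getD i 0 = (betaList c k).getD (i - k) 0 := by
      rw [decode, List.getD_append_right _ _ _ _ (by simpa using hi)]
      simp
    have hmem : (decode c k).getD i 0 ∈ betaList c k := by
      rw [hgd, List.getD_eq_getElem _ _ (by omega)]
      exact List.getElem_mem _
    exact (betaList_mem hmem).2

lemma decode_eps {c : ℕ → ℤ} {k i : ℕ} (h : i < k) :
    eps (decode c k) i = (-(c i)).toNat := by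
  rw [eps, decode_durfee, decode_drop, betaList_count (by omega) (by omega)]
  simp

lemma decode_dlt {c : ℕ → ℤ} {k i : ℕ} (h : i < k) :
    dlt (decode c k) i = (c i).toNat := by
  rw [dlt, decode_durfee, decode_getD_lt h]
  by_cases h1 : i + 1 < k
  · rw [decode_getD_lt h1, max_eq_right (by omega), rho_succ h]
    omega
  · have hk : i + 1 = k := by omega
    have hle : (decode c k).getD (i+1) 0 ≤ k := by
      have := part_le (decode_sorted c k) (i := i+1) (by rw [decode_durfee]; omega)
      rwa [decode_durfee] at this
    rw [max_eq_left hle]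
    have : rho c k i = (c i).toNat := by
      rw [rho_succ h, rho, hk, Finset.Ico_self, Finset.sum_empty]
      omega
    omega

lemma decode_cval {c : ℕ → ℤ} {k i : ℕ} (h : i < k) :
    cval (decode c k) i = c i := by
  rw [cval, decode_dlt h, decode_eps h]
  omega

lemma decode_disj (c : ℕ → ℤ) (k : ℕ) : Disj (decode c k) := by
  intro i hi
  rw [decode_durfee] at hi
  rw [decode_dlt hi, decode_eps hi]
  omega

lemma decode_sum (c : ℕ → ℤ) (k : ℕ) :
    (decode c k).sum = k * k + ∑ i ∈ Finset.range k, (i+1) * (c i).natAbs := by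
  rw [sum_formula (decode_sorted c k) (decode_pos c k), decode_durfee]
  congr 1
  refine Finset.sum_congr rfl (fun i hi => ?_)
  have hi' := Finset.mem_range.mp hi
  rw [decode_dlt hi', decode_eps hi']
  congr 1
  omega

lemma ranks_eq_of {L M : List ℕ} (hsL : L.Pairwise (· ≥ ·)) (hsM : M.Pairwise (· ≥ ·))
    (hdur : durfee M = durfee L) (hcv : ∀ i < durfee L, cval M i = cval L i) :
    ranks M = ranks L := by
  rw [ranks, ranks, hdur]
  refine List.map_congr_left (fun i hi => ?_)
  have hi' := List.mem_range.mp hi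
  rw [rank_sum hsM (durfee L - i - 1) i (by omega), hdur,
    rank_sum hsL (durfee L - i - 1) i (by omega)]
  refine Finset.sum_congr rfl (fun j hj => ?_)
  exact hcv j (Finset.mem_Ico.mp hj).2

lemma betaList_congr {c c' : ℕ → ℤ} : ∀ k, (∀ i < k, c i = c' i) → betaList c k = betaList c' k := by
  intro k
  induction k with
  | zero => intro _; rfl
  | succ k ih =>
    intro h
    rw [betaList, betaList, h k (by omega), ih (fun i hi => h i (by omega))]

lemma decode_congr {c c' : ℕ → ℤ} {k : ℕ} (h : ∀ i < k, c i = c' i) :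
    decode c k = decode c' k := by
  rw [decode, decode, betaList_congr k h]
  congr 1
  refine List.map_congr_left (fun i hi => ?_)
  congr 1
  rw [rho, rho]
  refine Finset.sum_congr rfl (fun j hj => ?_)
  rw [h j (Finset.mem_Ico.mp hj).2]

lemma sorted_drop {L : List ℕ} (hs : L.Pairwise (· ≥ ·)) (k : ℕ) :
    (L.drop k).Pairwise (· ≥ ·) :=
  List.Pairwise.sublist (List.drop_sublist k L) hs

lemma decode_cval_self {L : List ℕ} (hs : L.Pairwise (· ≥ ·)) (hp : ∀ x ∈ L, 0 < x)
    (hd : Disj L) : decode (cval L) (durfee L) = L := by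
  have hkl := durfee_le_length L
  have hdlt : ∀ i < durfee L, dlt L i = (cval L i).toNat := by
    intro i hi
    rcases hd i hi with h | h <;> rw [cval] <;> omega
  have heps : ∀ i < durfee L, eps L i = (-(cval L i)).toNat := by
    intro i hi
    rcases hd i hi with h | h <;> rw [cval] <;> omega
  have htake : (List.range (durfee L)).map
      (fun i => durfee L + rho (cval L) (durfee L) i) = L.take (durfee L) := by
    refine List.ext_getElem (by simp; omega) (fun i hi1 hi2 => ?_)
    have hik : i < durfee L := by simpa using hi1
    simp only [List.getElem_map, List.getElem_range, List.getElem_take]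
    have hrho : rho (cval L) (durfee L) i = L.getD i 0 - durfee L := by
      rw [rho, getD_sub_sum hs (durfee L - i) i (by omega)]
      refine Finset.sum_congr rfl (fun j hj => ?_)
      exact (hdlt j (Finset.mem_Ico.mp hj).2).symm
    have hge := part_ge hs hik
    rw [← List.getD_eq_getElem L 0 (show i < L.length by omega)]
    omega
  have hbeta : betaList (cval L) (durfee L) = L.drop (durfee L) := by
    refine sorted_eq_of_count (betaList_sorted _ _) (sorted_drop hs _) (fun v => ?_)
    by_cases h1 : 0 < v ∧ v ≤ durfee L
    · rw [betaList_count h1.1 h1.2, ← heps (v-1) (by omega), eps]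
      congr 1
      omega
    · rw [betaList_count_hi (by omega), eq_comm, List.count_eq_zero]
      intro hc
      have h2 := mem_drop_bounds hs hc
      have h3 := hp v (List.mem_of_mem_drop hc)
      omega
  rw [decode, htake, hbeta, List.take_append_drop]
end Decode


section Char

lemma sparts_mk {n : ℕ} {π : n.Partition} {M : List ℕ} (hM : π.parts = (M : Multiset ℕ))
    (hs : M.Pairwise (· ≥ ·)) : sparts π = M := by
  haveI : Std.Antisymm (α := ℕ) (· ≥ ·) := ⟨fun a b h1 h2 => le_antisymm h2 h1⟩
  refine List.Perm.eq_of_pairwise' (sparts_sorted _) hs ?_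
  rw [← Multiset.coe_eq_coe, sparts, hM, Multiset.sort_eq]

lemma isBasis_iff_disj {n : ℕ} (π : n.Partition) : IsBasis π ↔ Disj (sparts π) := by
  have hs := sparts_sorted π
  have hp := sparts_pos π
  constructor
  · intro hb
    by_contra hnd
    rw [Disj] at hnd
    push_neg at hnd
    obtain ⟨i₀, hik, h1, h2⟩ := hnd
    have hMs := decode_sorted (cval (sparts π)) (durfee (sparts π))
    have hMp := decode_pos (cval (sparts π)) (durfee (sparts π))
    have hr : ranks (decode (cval (sparts π)) (durfee (sparts π))) = ranks (sparts π) :=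
      ranks_eq_of hs hMs (decode_durfee _ _) (fun i hi => decode_cval hi)
    have hb2 := hb _ (ofList _ hMp) (by rw [sparts_ofList hMp hMs, hr])
    have hlt : (decode (cval (sparts π)) (durfee (sparts π))).sum < (sparts π).sum := by
      rw [decode_sum]
      have hl := sum_lt_of_not_disj hs hp hik h1 h2
      rw [Nval_ranks hs] at hl
      omega
    have hn := sparts_sum π
    omega
  · intro hd m π' hr
    have hs' := sparts_sorted π'
    have hp' := sparts_pos π'
    have h1 := sparts_sum π'
    have h2 := sparts_sum π
    have h3 := sum_ge hs' hp'
    have h4 := sum_eq_of_disj hs hp hd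
    have h5 : durfee (sparts π') = durfee (sparts π) := by
      have := congrArg List.length hr
      rwa [length_ranks, length_ranks] at this
    rw [hr, h5] at h3
    omega

lemma sig_eq_card {L : List ℕ} (hs : L.Pairwise (· ≥ ·)) (hp : ∀ x ∈ L, 0 < x) :
    sig L = ((Finset.range (durfee L)).filter (fun i => eps L i ≠ 0)).card := by
  rw [sig, ← List.card_toFinset]
  have himg : (L.drop (durfee L)).toFinset
      = ((Finset.range (durfee L)).filter (fun i => eps L i ≠ 0)).image (· + 1) := by
    ext v
    simp only [List.mem_toFinset, Finset.mem_image, Finset.mem_filter, Finset.mem_range]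
    constructor
    · intro hv
      have hb := mem_drop_bounds hs hv
      have hpos := hp v (List.mem_of_mem_drop hv)
      refine ⟨v - 1, ⟨by omega, ?_⟩, by omega⟩
      rw [eps, show v - 1 + 1 = v by omega]
      have := List.count_pos_iff.mpr hv
      omega
    · rintro ⟨i, ⟨hik, hne⟩, rfl⟩
      rw [eps] at hne
      exact List.count_pos_iff.mp (by omega)
  rw [himg, Finset.card_image_of_injective _ (fun a b hab => by omega)]

lemma sig_eq_neg_card {L : List ℕ} (hs : L.Pairwise (· ≥ ·)) (hp : ∀ x ∈ L, 0 < x)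
    (hd : Disj L) :
    sig L = ((Finset.range (durfee L)).filter (fun i => cval L i < 0)).card := by
  rw [sig_eq_card hs hp]
  congr 1
  refine Finset.filter_congr (fun i hi => ?_)
  have hik := Finset.mem_range.mp hi
  rcases hd i hik with h | h <;> rw [cval] <;> simp [h] <;> omega

lemma filter_update_neg {k j : ℕ} (hj : j < k) (c : ℕ → ℤ) (hcj : c j ≠ 0) :
    ((Finset.range k).filter (fun i => Function.update c j (-(c j)) i < 0))
      = if c j < 0 then ((Finset.range k).filter (fun i => c i < 0)).erase j
        else insert j ((Finset.range k).filter (fun i => c i < 0)) := by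
  split_ifs with h
  · ext i
    simp only [Finset.mem_filter, Finset.mem_erase, Finset.mem_range]
    by_cases hij : i = j
    · subst hij
      rw [Function.update_self]
      constructor
      · intro hh; omega
      · intro hh; exact absurd rfl hh.1
    · rw [Function.update_of_ne hij]
      constructor
      · intro hh; exact ⟨hij, hh⟩
      · intro hh; exact hh.2
  · ext i
    simp only [Finset.mem_filter, Finset.mem_insert, Finset.mem_range]
    by_cases hij : i = j
    · subst hij
      rw [Function.update_self]
      constructor
      · intro _; left; rfl
      · intro _; omega
    · rw [Function.update_of_ne hij]
      constructor
      · intro hh; right; exact hh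
      · intro hh
        rcases hh with hh | hh
        · exact absurd hh hij
        · exact hh

end Char


section Flip

variable {n : ℕ}

lemma flip_sum (π : n.Partition) (h1 : IsBasis π) {j : ℕ} (hj : j < durfee (sparts π)) :
    (decode (Function.update (cval (sparts π)) j (-(cval (sparts π) j)))
      (durfee (sparts π))).sum = n := by
  rw [decode_sum]
  have hd := (isBasis_iff_disj π).mp h1
  have hsum := sum_eq_of_disj (sparts_sorted π) (sparts_pos π) hd
  rw [sparts_sum π, Nval_ranks (sparts_sorted π)] at hsum
  have hcong : ∑ i ∈ Finset.range (durfee (sparts π)),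
      (i+1) * ((Function.update (cval (sparts π)) j (-(cval (sparts π) j))) i).natAbs
      = ∑ i ∈ Finset.range (durfee (sparts π)), (i+1) * (cval (sparts π) i).natAbs := by
    refine Finset.sum_congr rfl (fun i _ => ?_)
    by_cases hij : i = j
    · subst hij
      rw [Function.update_self, Int.natAbs_neg]
    · rw [Function.update_of_ne hij]
  rw [hcong]
  omega

noncomputable def flipPart (π : n.Partition) : n.Partition :=
  if h : IsBasis π ∧ ∃ i, i < durfee (sparts π) ∧ cval (sparts π) i ≠ 0 then
    ⟨((decode (Function.update (cval (sparts π)) (Nat.find h.2)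
        (-(cval (sparts π) (Nat.find h.2)))) (durfee (sparts π)) : List ℕ) : Multiset ℕ),
      fun {x} hx => decode_pos _ _ x (by simpa using hx),
      by simpa using flip_sum π h.1 (Nat.find_spec h.2).1⟩
  else π

variable {π : n.Partition}

lemma flip_sparts (h1 : IsBasis π)
    (h2 : ∃ i, i < durfee (sparts π) ∧ cval (sparts π) i ≠ 0) :
    sparts (flipPart π) = decode (Function.update (cval (sparts π)) (Nat.find h2)
      (-(cval (sparts π) (Nat.find h2)))) (durfee (sparts π)) := by
  rw [flipPart, dif_pos (⟨h1, h2⟩ : _ ∧ _)]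
  exact sparts_mk rfl (decode_sorted _ _)

lemma flip_basis (h1 : IsBasis π)
    (h2 : ∃ i, i < durfee (sparts π) ∧ cval (sparts π) i ≠ 0) : IsBasis (flipPart π) := by
  rw [isBasis_iff_disj, flip_sparts h1 h2]
  exact decode_disj _ _

lemma flip_durfee (h1 : IsBasis π)
    (h2 : ∃ i, i < durfee (sparts π) ∧ cval (sparts π) i ≠ 0) : durfee (sparts (flipPart π)) = durfee (sparts π) := by
  rw [flip_sparts h1 h2, decode_durfee]

lemma flip_cval (h1 : IsBasis π)
    (h2 : ∃ i, i < durfee (sparts π) ∧ cval (sparts π) i ≠ 0) {i : ℕ} (hik : i < durfee (sparts π)) :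
    cval (sparts (flipPart π)) i
      = Function.update (cval (sparts π)) (Nat.find h2) (-(cval (sparts π) (Nat.find h2))) i := by
  rw [flip_sparts h1 h2, decode_cval hik]

lemma flip_exists (h1 : IsBasis π)
    (h2 : ∃ i, i < durfee (sparts π) ∧ cval (sparts π) i ≠ 0) :
    ∃ i, i < durfee (sparts (flipPart π)) ∧ cval (sparts (flipPart π)) i ≠ 0 := by
  refine ⟨Nat.find h2, ?_, ?_⟩
  · rw [flip_durfee h1 h2]
    exact (Nat.find_spec h2).1
  · rw [flip_cval h1 h2 (Nat.find_spec h2).1, Function.update_self]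
    have := (Nat.find_spec h2).2
    omega

lemma flip_flip (h1 : IsBasis π)
    (h2 : ∃ i, i < durfee (sparts π) ∧ cval (sparts π) i ≠ 0) : flipPart (flipPart π) = π := by
  have hb' := flip_basis h1 h2
  have h2' := flip_exists h1 h2
  have hjj : Nat.find h2' = Nat.find h2 := by
    rw [Nat.find_eq_iff]
    constructor
    · refine ⟨?_, ?_⟩
      · rw [flip_durfee h1 h2]; exact (Nat.find_spec h2).1
      · rw [flip_cval h1 h2 (Nat.find_spec h2).1, Function.update_self]
        have := (Nat.find_spec h2).2
        omega
    · intro m hm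
      have hmin := Nat.find_min h2 hm
      intro hc
      rcases hc with ⟨hmk, hmc⟩
      rw [flip_durfee h1 h2] at hmk
      rw [flip_cval h1 h2 hmk,
        Function.update_of_ne (by omega)] at hmc
      exact hmin ⟨hmk, hmc⟩
  apply sparts_injective
  rw [flip_sparts hb' h2', hjj, flip_durfee h1 h2]
  have hd := (isBasis_iff_disj π).mp h1
  have hcong : decode (Function.update (cval (sparts (flipPart π))) (Nat.find h2)
      (-(cval (sparts (flipPart π)) (Nat.find h2)))) (durfee (sparts π))
      = decode (cval (sparts π)) (durfee (sparts π)) := by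
    refine decode_congr (fun i hik => ?_)
    by_cases hij : i = Nat.find h2
    · subst hij
      rw [Function.update_self, flip_cval h1 h2 hik, Function.update_self]
      ring
    · rw [Function.update_of_ne hij, flip_cval h1 h2 hik, Function.update_of_ne hij]
  rw [hcong, decode_cval_self (sparts_sorted π) (sparts_pos π) hd]

lemma flip_sig (h1 : IsBasis π)
    (h2 : ∃ i, i < durfee (sparts π) ∧ cval (sparts π) i ≠ 0) : Even (sig (sparts (flipPart π))) ↔ ¬ Even (sig (sparts π)) := by
  have hb' := flip_basis h1 h2
  have hd' := (isBasis_iff_disj _).mp hb'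
  have hd := (isBasis_iff_disj π).mp h1
  have hj := (Nat.find_spec h2).1
  have hcj := (Nat.find_spec h2).2
  rw [sig_eq_neg_card (sparts_sorted _) (sparts_pos _) hd',
    sig_eq_neg_card (sparts_sorted π) (sparts_pos π) hd,
    flip_durfee h1 h2]
  have hfc : ((Finset.range (durfee (sparts π))).filter
      (fun i => cval (sparts (flipPart π)) i < 0))
      = ((Finset.range (durfee (sparts π))).filter
        (fun i => Function.update (cval (sparts π)) (Nat.find h2)
          (-(cval (sparts π) (Nat.find h2))) i < 0)) := by
    refine Finset.filter_congr (fun i hi => ?_)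
    rw [flip_cval h1 h2 (Finset.mem_range.mp hi)]
  rw [hfc, filter_update_neg hj _ hcj]
  set S := (Finset.range (durfee (sparts π))).filter (fun i => cval (sparts π) i < 0) with hS
  split_ifs with hneg
  · have hmem : Nat.find h2 ∈ S := by
      rw [hS, Finset.mem_filter, Finset.mem_range]
      exact ⟨hj, hneg⟩
    rw [Finset.card_erase_of_mem hmem]
    have hpos : 0 < S.card := Finset.card_pos.mpr ⟨_, hmem⟩
    rw [Nat.even_sub (by omega : 1 ≤ S.card)]
    have hone : ¬ Even (1 : ℕ) := by decide
    tauto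
  · have hmem : Nat.find h2 ∉ S := by
      rw [hS, Finset.mem_filter]
      intro hc
      exact hneg hc.2
    rw [Finset.card_insert_of_notMem hmem]
    simp [Nat.even_add_one]

end Flip

section Count

variable {n : ℕ}

lemma zero_cval_square {π : n.Partition} (hb : IsBasis π)
    (hz : ∀ i < durfee (sparts π), cval (sparts π) i = 0) :
    n = durfee (sparts π) * durfee (sparts π) ∧
      sparts π = decode (fun _ => 0) (durfee (sparts π)) := by
  have hd := (isBasis_iff_disj π).mp hb
  have hdec : decode (cval (sparts π)) (durfee (sparts π))
      = decode (fun _ => 0) (durfee (sparts π)) :=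
    decode_congr (fun i hi => hz i hi)
  have hL : sparts π = decode (fun _ => 0) (durfee (sparts π)) := by
    rw [← hdec, decode_cval_self (sparts_sorted π) (sparts_pos π) hd]
  refine ⟨?_, hL⟩
  have hsum := sparts_sum π
  have h2 := congrArg List.sum hL
  rw [decode_sum] at h2
  simp only [Int.natAbs_zero, Nat.mul_zero, Finset.sum_const_zero, Nat.add_zero,
    mul_zero, add_zero] at h2
  omega

lemma zero_sig_even {π : n.Partition} (hb : IsBasis π)
    (hz : ∀ i < durfee (sparts π), cval (sparts π) i = 0) :
    sig (sparts π) = 0 := by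
  have hd := (isBasis_iff_disj π).mp hb
  rw [sig_eq_neg_card (sparts_sorted π) (sparts_pos π) hd, Finset.card_eq_zero,
    Finset.filter_eq_empty_iff]
  intro i hi
  rw [hz i (Finset.mem_range.mp hi)]
  omega

lemma not_zero_of_odd {π : n.Partition} (hb : IsBasis π) (ho : Odd (sig (sparts π))) :
    ∃ i, i < durfee (sparts π) ∧ cval (sparts π) i ≠ 0 := by
  by_contra hc
  push_neg at hc
  have := zero_sig_even hb (fun i hi => hc i hi)
  rw [this] at ho
  exact (Nat.not_odd_iff_even.mpr Even.zero) ho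

end Count

theorem statement5 (n : ℕ) :
    (Nat.card {π : n.Partition // IsBasis π ∧ Even (sig (sparts π))} : ℤ) -
      (Nat.card {π : n.Partition // IsBasis π ∧ Odd (sig (sparts π))} : ℤ) =
      if IsSquare n then 1 else 0 := by
  classical
  have hcard_e : Nat.card {π : n.Partition // IsBasis π ∧ Even (sig (sparts π))}
      = (Finset.univ.filter
          (fun π : n.Partition => IsBasis π ∧ Even (sig (sparts π)))).card := by
    rw [Nat.card_eq_fintype_card, Fintype.card_subtype]
  have hcard_o : Nat.card {π : n.Partition // IsBasis π ∧ Odd (sig (sparts π))}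
      = (Finset.univ.filter
          (fun π : n.Partition => IsBasis π ∧ Odd (sig (sparts π)))).card := by
    rw [Nat.card_eq_fintype_card, Fintype.card_subtype]
  set Se := Finset.univ.filter
    (fun π : n.Partition => IsBasis π ∧ Even (sig (sparts π))) with hSe
  set So := Finset.univ.filter
    (fun π : n.Partition => IsBasis π ∧ Odd (sig (sparts π))) with hSo
  set Z := Finset.univ.filter
    (fun π : n.Partition => IsBasis π ∧ ∀ i < durfee (sparts π), cval (sparts π) i = 0)
    with hZ
  have hZsub : Z ⊆ Se := by
    intro π hπ
    rw [hZ, Finset.mem_filter] at hπ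
    rw [hSe, Finset.mem_filter]
    refine ⟨Finset.mem_univ _, hπ.2.1, ?_⟩
    rw [zero_sig_even hπ.2.1 hπ.2.2]
    exact Even.zero
  have hbij : (Se \ Z).card = So.card := by
    refine Finset.card_bij' (fun a _ => flipPart a) (fun b _ => flipPart b) ?_ ?_ ?_ ?_
    · intro a ha
      rw [Finset.mem_sdiff, hSe, hZ, Finset.mem_filter, Finset.mem_filter] at ha
      obtain ⟨⟨-, hb, he⟩, hnz⟩ := ha
      have h2 : ∃ i, i < durfee (sparts a) ∧ cval (sparts a) i ≠ 0 := by
        by_contra hc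
        push_neg at hc
        exact hnz ⟨Finset.mem_univ _, hb, fun i hi => hc i hi⟩
      rw [hSo, Finset.mem_filter]
      refine ⟨Finset.mem_univ _, flip_basis hb h2, ?_⟩
      rw [← Nat.not_even_iff_odd]
      intro hc
      exact ((flip_sig hb h2).mp hc) he
    · intro b hb
      rw [hSo, Finset.mem_filter] at hb
      obtain ⟨-, hbb, ho⟩ := hb
      have h2 := not_zero_of_odd hbb ho
      rw [Finset.mem_sdiff, hSe, hZ, Finset.mem_filter, Finset.mem_filter]
      have hfb := flip_basis hbb h2
      refine ⟨⟨Finset.mem_univ _, hfb, ?_⟩, ?_⟩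
      · rw [flip_sig hbb h2, Nat.not_even_iff_odd]
        exact ho
      · intro hc
        obtain ⟨j, hj, hcj⟩ := flip_exists hbb h2
        exact hcj (hc.2.2 j hj)
    · intro a ha
      rw [Finset.mem_sdiff, hSe, hZ, Finset.mem_filter, Finset.mem_filter] at ha
      obtain ⟨⟨-, hb, he⟩, hnz⟩ := ha
      have h2 : ∃ i, i < durfee (sparts a) ∧ cval (sparts a) i ≠ 0 := by
        by_contra hc
        push_neg at hc
        exact hnz ⟨Finset.mem_univ _, hb, fun i hi => hc i hi⟩
      exact flip_flip hb h2
    · intro b hb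
      rw [hSo, Finset.mem_filter] at hb
      obtain ⟨-, hbb, ho⟩ := hb
      exact flip_flip hbb (not_zero_of_odd hbb ho)
  have hZcard : Z.card = if IsSquare n then 1 else 0 := by
    split_ifs with hsq
    · obtain ⟨m, hm⟩ := hsq
      have hsum0 : (decode (fun _ => (0:ℤ)) m).sum = n := by
        rw [decode_sum]
        simp [hm]
      let π₀ : n.Partition :=
        ⟨((decode (fun _ => (0:ℤ)) m : List ℕ) : Multiset ℕ),
          fun {x} hx => decode_pos _ _ x (by simpa using hx),
          by simpa using hsum0⟩
      have hsp0 : sparts π₀ = decode (fun _ => (0:ℤ)) m :=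
        sparts_mk rfl (decode_sorted _ _)
      have hb0 : IsBasis π₀ := by
        rw [isBasis_iff_disj, hsp0]
        exact decode_disj _ _
      have hz0 : ∀ i < durfee (sparts π₀), cval (sparts π₀) i = 0 := by
        intro i hi
        rw [hsp0] at hi ⊢
        rw [decode_durfee] at hi
        rw [decode_cval hi]
      have hZsing : Z = {π₀} := by
        ext π
        rw [hZ, Finset.mem_filter, Finset.mem_singleton]
        constructor
        · rintro ⟨-, hbq, hzq⟩
          obtain ⟨hn2, hLq⟩ := zero_cval_square hbq hzq
          have hkm : durfee (sparts π) = m := by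
            refine Nat.mul_self_inj.mp ?_
            omega
          apply sparts_injective
          rw [hLq, hkm, ← hsp0]
        · rintro rfl
          exact ⟨Finset.mem_univ _, hb0, hz0⟩
      rw [hZsing, Finset.card_singleton]
    · rw [Finset.card_eq_zero, Finset.filter_eq_empty_iff]
      rintro π - ⟨hbq, hzq⟩
      obtain ⟨hn2, -⟩ := zero_cval_square hbq hzq
      exact hsq ⟨durfee (sparts π), hn2⟩
  have hsplit := Finset.card_sdiff_add_card_eq_card hZsub
  rw [hcard_e, hcard_o, ← hsplit, hbij, hZcard]
  split_ifs <;> push_cast <;> ring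


end BasisPartitions
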